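/- Every functionally bounded subset of a Tychonoff P-space is finite. -/
import Mathlib


/-- Every functionally bounded subset of a Tychonoff P-space is finite. -/
theorem stmt_0 {X : Type*} [TopologicalSpace X] [T2Space X] [CompletelyRegularSpace X]
    (hP : ∀ s : ℕ → Set X, (∀ n, IsOpen (s n)) → IsOpen (⋂ n, s n))
    (A : Set X) (hA : ∀ f : X → ℝ, Continuous f → ∃ C, ∀ x ∈ A, |f x| ≤ C) :
    A.Finite := by
  classical
  by_contra hAfin
  have hAinf : A.Infinite := hAfin
  -- zero sets are clopen
  have zero_clopen : ∀ g : X → ℝ, Continuous g → IsClopen (g ⁻¹' {0}) := by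
    intro g hg
    constructor
    · exact isClosed_singleton.preimage hg
    · have heq : g ⁻¹' {0} = ⋂ n : ℕ, g ⁻¹' (Metric.ball 0 (1 / (n + 1))) := by
        ext x
        simp only [Set.mem_preimage, Set.mem_singleton_iff, Set.mem_iInter, Metric.mem_ball,
          Real.dist_eq, sub_zero]
        constructor
        · intro h n
          rw [h]
          simp
          positivity
        · intro h
          by_contra hne
          obtain ⟨n, hn⟩ := exists_nat_one_div_lt (abs_pos.mpr hne)
          exact absurd (h n) (not_lt.mpr hn.le)
      rw [heq]
      exact hP _ fun n => Metric.isOpen_ball.preimage hg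
  -- clopen separation of points
  have sep : ∀ a b : X, a ≠ b → ∃ U : Set X, IsClopen U ∧ a ∈ U ∧ b ∉ U := by
    intro a b hab
    obtain ⟨f, hf, hfa, hfb⟩ := CompletelyRegularSpace.completely_regular a {b}
      isClosed_singleton (by simpa using hab)
    refine ⟨(fun y => (f y : ℝ)) ⁻¹' {0}, zero_clopen _ (continuous_subtype_val.comp hf), ?_, ?_⟩
    · simp [hfa]
    · have : f b = 1 := hfb rfl
      simp [this]
  -- one step of the construction
  have step : ∀ B : Set X, B.Infinite →
      ∃ p : Set X × X, IsClopen p.1 ∧ p.2 ∈ p.1 ∧ p.2 ∈ B ∧ (B \ p.1).Infinite := by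
    intro B hB
    obtain ⟨a, ha, b, hb, hab⟩ := hB.nontrivial
    obtain ⟨U, hU, haU, hbU⟩ := sep a b hab
    by_cases h : (B ∩ U).Infinite
    · exact ⟨(Uᶜ, b), hU.compl, hbU, hb, by rwa [Set.diff_compl]⟩
    · refine ⟨(U, a), hU, haU, ha, ?_⟩
      have h1 : (B \ (B ∩ U)).Infinite := hB.diff (Set.not_infinite.mp h)
      have h2 : B \ (B ∩ U) = B \ U := by ext x; simp
      rwa [h2] at h1
  choose p hclopen hmemV hmemB hinfd using step
  -- sequence of infinite sets
  let Bs : ℕ → {s : Set X // s.Infinite} := fun n =>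
    Nat.rec ⟨A, hAinf⟩ (fun _ q => ⟨q.1 \ (p q.1 q.2).1, hinfd q.1 q.2⟩) n
  let Vn : ℕ → Set X := fun n => (p (Bs n).1 (Bs n).2).1
  let xn : ℕ → X := fun n => (p (Bs n).1 (Bs n).2).2
  have hBsucc : ∀ n, (Bs (n + 1)).1 = (Bs n).1 \ Vn n := fun n => rfl
  have hVclopen : ∀ n, IsClopen (Vn n) := fun n => hclopen _ _
  have hxV : ∀ n, xn n ∈ Vn n := fun n => hmemV _ _
  have hxB : ∀ n, xn n ∈ (Bs n).1 := fun n => hmemB _ _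
  have hBmono : ∀ m n, m ≤ n → (Bs n).1 ⊆ (Bs m).1 := by
    intro m n hmn
    induction n with
    | zero => simp_all
    | succ k ih =>
      rcases Nat.lt_or_ge m (k + 1) with h | h
      · exact (hBsucc k ▸ Set.diff_subset).trans (ih (Nat.lt_succ_iff.mp h))
      · have : m = k + 1 := le_antisymm hmn h
        subst this; exact subset_rfl
  have hBA : ∀ n, (Bs n).1 ⊆ A := fun n => hBmono 0 n (Nat.zero_le n)
  have hxnot : ∀ m n, m < n → xn n ∉ Vn m := by
    intro m n hmn hx
    have : xn n ∈ (Bs (m + 1)).1 := hBmono (m + 1) n hmn (hxB n)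
    rw [hBsucc] at this
    exact this.2 hx
  -- disjointified clopen sets
  set W : ℕ → Set X := fun n => Vn n \ ⋃ m ∈ Finset.range n, Vn m with hW
  have hWclopen : ∀ n, IsClopen (W n) := by
    intro n
    exact (hVclopen n).diff (isClopen_biUnion_finset fun m _ => hVclopen m)
  have hxW : ∀ n, xn n ∈ W n := by
    intro n
    refine ⟨hxV n, ?_⟩
    simp only [Set.mem_iUnion, Finset.mem_range, not_exists]
    intro m hm
    exact fun hx => hxnot m n hm hx
  have hWdisj : ∀ m n x, x ∈ W m → x ∈ W n → m = n := by
    intro m n x hm hn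
    by_contra hne
    rcases Nat.lt_or_ge m n with h | h
    · exact hn.2 (Set.mem_biUnion (Finset.mem_range.mpr h) hm.1)
    · exact hm.2 (Set.mem_biUnion (Finset.mem_range.mpr (lt_of_le_of_ne h (Ne.symm hne))) hn.1)
  -- the unbounded continuous function
  set f : X → ℝ := fun x => if h : ∃ n, x ∈ W n then (h.choose : ℝ) else 0 with hf
  have hfW : ∀ n x, x ∈ W n → f x = n := by
    intro n x hx
    have h : ∃ k, x ∈ W k := ⟨n, hx⟩
    simp only [hf, dif_pos h]
    exact_mod_cast hWdisj h.choose n x h.choose_spec hx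
  have hfcont : Continuous f := by
    apply IsLocallyConstant.continuous
    rw [IsLocallyConstant.iff_exists_open]
    intro x
    by_cases h : ∃ n, x ∈ W n
    · obtain ⟨n, hn⟩ := h
      refine ⟨W n, (hWclopen n).2, hn, fun y hy => ?_⟩
      simp [hfW n y hy, hfW n x hn]
    · refine ⟨⋂ n, (W n)ᶜ, hP _ fun n => (hWclopen n).1.isOpen_compl, ?_, ?_⟩
      · simp only [Set.mem_iInter, Set.mem_compl_iff]
        exact fun n hx => h ⟨n, hx⟩
      · intro y hy
        simp only [Set.mem_iInter, Set.mem_compl_iff] at hy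
        have hy' : ¬∃ n, y ∈ W n := fun ⟨n, hn⟩ => hy n hn
        simp only [hf, dif_neg h, dif_neg hy']
  obtain ⟨C, hC⟩ := hA f hfcont
  set n := ⌈C⌉₊ + 1 with hn
  have h1 : |f (xn n)| ≤ C := hC _ (hBA n (hxB n))
  rw [hfW n _ (hxW n)] at h1
  rw [abs_of_nonneg (by positivity)] at h1
  have h2 : C < (n : ℝ) := by
    calc C ≤ (⌈C⌉₊ : ℝ) := Nat.le_ceil C
    _ < n := by exact_mod_cast Nat.lt_succ_self _
  exact absurd h1 (not_le.mpr h2)
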